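/- If g and g' in SL(2,ℂ) satisfy tr(g) = tr(g') and tr(g) ≠ 2 and tr(g) ≠ −2, then there exists h in SL(2,ℂ) with g' = h g h⁻¹. In other words, the fiber of the trace map over any value x ≠ ±2 is a single conjugacy class of SL(2,ℂ). -/

import Mathlib

open Matrix
open scoped MatrixGroups

private lemma key_conj (a b c d : ℂ) (hdet : a * d - b * c = 1) (h2 : a + d ≠ 2)
    (hm2 : a + d ≠ -2) :
    ∃ P : Matrix (Fin 2) (Fin 2) ℂ, P.det ≠ 0 ∧
      !![a, b; c, d] * P = P * !![0, -1; 1, a + d] := by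
  by_cases hc0 : c ≠ 0
  · refine ⟨!![1, a; 0, c], by simp [Matrix.det_fin_two, hc0], ?_⟩
    ext i j; fin_cases i <;> fin_cases j <;>
      simp [Matrix.mul_apply, Fin.sum_univ_two] <;> first | ring1 | linear_combination hdet | linear_combination -hdet
  by_cases hb0 : b ≠ 0
  · refine ⟨!![0, b; 1, d], by simp [Matrix.det_fin_two, hb0], ?_⟩
    ext i j; fin_cases i <;> fin_cases j <;>
      simp [Matrix.mul_apply, Fin.sum_univ_two] <;> first | ring1 | linear_combination hdet | linear_combination -hdet
  · push_neg at hb0 hc0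
    subst hb0 hc0
    have had : a ≠ d := by
      intro h; subst h
      have h1 : a * a = 1 := by linear_combination hdet
      rcases mul_self_eq_one_iff.mp h1 with h' | h'
      · exact h2 (by rw [h']; norm_num)
      · exact hm2 (by rw [h']; norm_num)
    refine ⟨!![1, a; 1, d], ?_, ?_⟩
    · rw [Matrix.det_fin_two]; simpa [sub_ne_zero] using fun h => had h.symm
    · ext i j; fin_cases i <;> fin_cases j <;>
        simp [Matrix.mul_apply, Fin.sum_univ_two] <;> first | ring1 | linear_combination hdet | linear_combination -hdet

/-- Any element of `SL(2,ℂ)` with trace `≠ ±2` is conjugate to the companion matrix. -/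
private lemma conj_comp (g : SL(2, ℂ))
    (h2 : Matrix.trace ((g : Matrix (Fin 2) (Fin 2) ℂ)) ≠ 2)
    (hm2 : Matrix.trace ((g : Matrix (Fin 2) (Fin 2) ℂ)) ≠ -2) :
    ∃ h : SL(2, ℂ), (g : Matrix (Fin 2) (Fin 2) ℂ) * h =
      (h : Matrix (Fin 2) (Fin 2) ℂ) *
        !![0, -1; 1, Matrix.trace ((g : Matrix (Fin 2) (Fin 2) ℂ))] := by
  set a := (g : Matrix (Fin 2) (Fin 2) ℂ) 0 0
  set b := (g : Matrix (Fin 2) (Fin 2) ℂ) 0 1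
  set c := (g : Matrix (Fin 2) (Fin 2) ℂ) 1 0
  set d := (g : Matrix (Fin 2) (Fin 2) ℂ) 1 1
  have htr : Matrix.trace ((g : Matrix (Fin 2) (Fin 2) ℂ)) = a + d :=
    Matrix.trace_fin_two _
  have heta : (g : Matrix (Fin 2) (Fin 2) ℂ) = !![a, b; c, d] :=
    Matrix.eta_fin_two _
  have hdet : a * d - b * c = 1 := by
    have := g.2; rwa [Matrix.det_fin_two] at this
  rw [htr] at h2 hm2
  obtain ⟨P, hP, hPe⟩ := key_conj a b c d hdet h2 hm2
  obtain ⟨s, hs⟩ : ∃ s : ℂ, s ^ 2 = (P.det)⁻¹ := ⟨_, Complex.cpow_nat_inv_pow _ two_ne_zero⟩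
  have hs0 : s ≠ 0 := by
    intro h; rw [h] at hs; simp at hs
    exact hP (by simpa using congrArg Inv.inv hs.symm)
  refine ⟨⟨s • P, ?_⟩, ?_⟩
  · rw [Matrix.det_smul, Fintype.card_fin, hs, inv_mul_cancel₀ hP]
  · show (g : Matrix (Fin 2) (Fin 2) ℂ) * (s • P) = (s • P) * _
    rw [Matrix.mul_smul, Matrix.smul_mul, htr, heta, hPe]

/-- Two elements of `SL(2,ℂ)` with the same trace `≠ ±2` are conjugate in `SL(2,ℂ)`:
the fiber of the trace map over any value `x ≠ ±2` is a single conjugacy class. -/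
theorem conjugate_of_trace_eq_of_trace_ne
    (g g' : SL(2, ℂ))
    (htr : Matrix.trace ((g : Matrix (Fin 2) (Fin 2) ℂ)) =
      Matrix.trace ((g' : Matrix (Fin 2) (Fin 2) ℂ)))
    (h2 : Matrix.trace ((g : Matrix (Fin 2) (Fin 2) ℂ)) ≠ 2)
    (hm2 : Matrix.trace ((g : Matrix (Fin 2) (Fin 2) ℂ)) ≠ -2) :
    ∃ h : SL(2, ℂ), g' = h * g * h⁻¹ := by
  obtain ⟨h1, hh1⟩ := conj_comp g h2 hm2
  obtain ⟨h2', hh2⟩ := conj_comp g' (htr ▸ h2) (htr ▸ hm2)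
  rw [← htr] at hh2
  set C : SL(2, ℂ) := ⟨!![0, -1; 1, Matrix.trace ((g : Matrix (Fin 2) (Fin 2) ℂ))],
    by simp [Matrix.det_fin_two]⟩ with hC
  have e1 : g * h1 = h1 * C := Subtype.ext (by
    exact hh1)
  have e2 : g' * h2' = h2' * C := Subtype.ext (by
    exact hh2)
  refine ⟨h2' * h1⁻¹, ?_⟩
  have hCeq : C = h1⁻¹ * g * h1 := by
    rw [mul_assoc, e1]; group
  rw [_root_.mul_inv_rev, inv_inv]
  calc g' = h2' * C * h2'⁻¹ := by rw [← e2]; group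
    _ = h2' * (h1⁻¹ * g * h1) * h2'⁻¹ := by rw [hCeq]
    _ = h2' * h1⁻¹ * g * (h1 * h2'⁻¹) := by group
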